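/- arXiv:1610.00098 — 4 statements merged into one kernel-verified Lean document; each statement's English description precedes it below -/
import Mathlib

section
/- Let n ≥ 1 be an integer, b > 0, q ∈ [0, π] and ξ = cos q. Then for every complex number s and every complex number r with r² = s² + b², one has (s+r)^n + (−1)^n (r−s)^n − 2ξ(−i)^n b^n = 2^n · Π_{l=0}^{n−1} ( s + i b cos((q + 2πl)/n) ). -/
open scoped BigOperators
open Complex

lemma prod_root_aux (n : ℕ) (hn : 1 ≤ n) (ζ : ℂ) (hζ : IsPrimitiveRoot ζ n) (d w : ℂ) :
    ∏ l ∈ Finset.range n, (w + d * ζ ^ l) = w ^ n - (-d) ^ n := by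
  have h := X_pow_sub_C_eq_prod (R := ℂ) hζ (by omega : 0 < n)
    (rfl : (-d) ^ n = (-d) ^ n)
  have h2 := congrArg (Polynomial.eval w) h
  simp [Polynomial.eval_prod] at h2
  rw [h2]
  exact Finset.prod_congr rfl fun l _ => by ring


/-- **Factorization of `P_n(s)`** (Lemma 3.4, first part). For `n ≥ 1`, `b > 0`,
`q ∈ [0,π]`, `ξ = cos q`, and any complex `s, r` with `r² = s² + b²`:
`(s+r)^n + (−1)^n (r−s)^n − 2ξ(−i)^n b^n = 2^n ∏_{l=0}^{n−1} (s + i b cos((q+2πl)/n))`. -/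
theorem Pn_factorization
    (n : ℕ) (hn : 1 ≤ n) (b : ℝ) (hb : 0 < b) (q : ℝ) (hq : q ∈ Set.Icc 0 Real.pi)
    (ξ : ℝ) (hξ : ξ = Real.cos q) (s r : ℂ) (hr : r ^ 2 = s ^ 2 + (b : ℂ) ^ 2) :
    (s + r) ^ n + (-1 : ℂ) ^ n * (r - s) ^ n - 2 * (ξ : ℂ) * (-Complex.I) ^ n * (b : ℂ) ^ n
      = 2 ^ n * ∏ l ∈ Finset.range n,
          (s + Complex.I * (b : ℂ) * (Real.cos ((q + 2 * Real.pi * l) / n) : ℝ)) := by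
  have hn0 : (n : ℂ) ≠ 0 := Nat.cast_ne_zero.mpr (by omega)
  have hbC : (b : ℂ) ≠ 0 := by exact_mod_cast hb.ne'
  have hrs : (r - s) * (s + r) = (b : ℂ) ^ 2 := by linear_combination hr
  have hw0 : s + r ≠ 0 := by
    intro h
    have h2 : (b : ℂ) ^ 2 = 0 := by rw [← hrs, h, mul_zero]
    exact hbC ((pow_eq_zero_iff (Nat.succ_ne_zero 1)).mp h2)
  set ζ : ℂ := Complex.exp (2 * Real.pi * I / n) with hζdef
  have hζ : IsPrimitiveRoot ζ n := Complex.isPrimitiveRoot_exp n (by omega)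
  have hζ' : IsPrimitiveRoot ζ⁻¹ n := hζ.inv
  have hζinv : ζ⁻¹ = Complex.exp (-(2 * Real.pi * I / n)) := by
    rw [Complex.exp_neg]
  set d1 : ℂ := I * b * Complex.exp ((q : ℂ) / n * I) with hd1def
  set d2 : ℂ := I * b * Complex.exp (-((q : ℂ) / n * I)) with hd2def
  -- exponent identities
  have hexp1 : ∀ l : ℕ, d1 * ζ ^ l
      = I * b * Complex.exp ((((q + 2 * Real.pi * l) / n : ℝ)) * I) := by
    intro l
    rw [hd1def, hζdef, ← Complex.exp_nat_mul, mul_assoc, ← Complex.exp_add]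
    congr 2
    push_cast
    field_simp
  have hexp2 : ∀ l : ℕ, d2 * (ζ⁻¹) ^ l
      = I * b * Complex.exp (-((((q + 2 * Real.pi * l) / n : ℝ)) * I)) := by
    intro l
    rw [hd2def, hζinv, ← Complex.exp_nat_mul, mul_assoc, ← Complex.exp_add]
    congr 2
    push_cast
    field_simp
    ring
  -- per-factor identity
  have hfac : ∀ l ∈ Finset.range n,
      2 * (s + r) * (s + I * (b : ℂ) * ((Real.cos ((q + 2 * Real.pi * l) / n) : ℝ) : ℂ))
        = ((s + r) + d1 * ζ ^ l) * ((s + r) + d2 * (ζ⁻¹) ^ l) := by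
    intro l _
    rw [hexp1 l, hexp2 l]
    set θ : ℝ := (q + 2 * Real.pi * l) / n with hθ
    have hcos : ((Real.cos θ : ℝ) : ℂ)
        = (Complex.exp ((θ : ℂ) * I) + Complex.exp (-((θ : ℂ) * I))) / 2 := by
      rw [Complex.ofReal_cos, Complex.cos]; ring_nf
    have hmul : Complex.exp ((θ : ℂ) * I) * Complex.exp (-((θ : ℂ) * I)) = 1 := by
      rw [← Complex.exp_add]; simp
    have hI : (I : ℂ) ^ 2 = -1 := Complex.I_sq
    linear_combination (-1 : ℂ) * hr + (2 * I * (b : ℂ) * (s + r)) * hcos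
      + (-(I ^ 2) * (b : ℂ) ^ 2) * hmul + (-((b : ℂ) ^ 2)) * hI
  -- products
  have hP1 := prod_root_aux n hn ζ hζ d1 (s + r)
  have hP2 := prod_root_aux n hn ζ⁻¹ hζ' d2 (s + r)
  have hbig : (2 ^ n * ∏ l ∈ Finset.range n,
        (s + I * (b : ℂ) * ((Real.cos ((q + 2 * Real.pi * l) / n) : ℝ) : ℂ))) * (s + r) ^ n
      = ((s + r) ^ n - (-d1) ^ n) * ((s + r) ^ n - (-d2) ^ n) := by
    rw [← hP1, ← hP2, ← Finset.prod_mul_distrib, ← Finset.prod_congr rfl hfac,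
      Finset.prod_mul_distrib, Finset.prod_const, Finset.card_range, mul_pow]
    ring
  -- evaluate (-d1)^n and (-d2)^n
  have hE1 : (-d1) ^ n = (-I) ^ n * (b : ℂ) ^ n * Complex.exp ((q : ℂ) * I) := by
    rw [hd1def, show -(I * (b : ℂ) * Complex.exp ((q : ℂ) / n * I))
        = (-I) * (b : ℂ) * Complex.exp ((q : ℂ) / n * I) from by ring,
      mul_pow, mul_pow, ← Complex.exp_nat_mul]
    congr 2
    field_simp
  have hE2 : (-d2) ^ n = (-I) ^ n * (b : ℂ) ^ n * Complex.exp (-((q : ℂ) * I)) := by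
    rw [hd2def, show -(I * (b : ℂ) * Complex.exp (-((q : ℂ) / n * I)))
        = (-I) * (b : ℂ) * Complex.exp (-((q : ℂ) / n * I)) from by ring,
      mul_pow, mul_pow, ← Complex.exp_nat_mul]
    congr 2
    field_simp
  -- final assembly
  have hbn : (r - s) ^ n * (s + r) ^ n = ((b : ℂ) ^ n) ^ 2 := by
    rw [← mul_pow, hrs, ← pow_mul, ← pow_mul, mul_comm]
  have hEq : Complex.exp ((q : ℂ) * I) * Complex.exp (-((q : ℂ) * I)) = 1 := by
    rw [← Complex.exp_add]; simp
  have hξC : (ξ : ℂ) = (Complex.exp ((q : ℂ) * I) + Complex.exp (-((q : ℂ) * I))) / 2 := by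
    rw [hξ, Complex.ofReal_cos, Complex.cos]; ring_nf
  have hA2 : ((-I : ℂ) ^ n) ^ 2 = (-1 : ℂ) ^ n := by
    rw [← pow_mul, mul_comm, pow_mul]
    norm_num [Complex.I_sq]
  refine mul_right_cancel₀ (pow_ne_zero n hw0) ?_
  rw [hbig, hE1, hE2]
  linear_combination ((-1 : ℂ)) ^ n * hbn
    + (-2 * (-I) ^ n * (b : ℂ) ^ n * (s + r) ^ n) * hξC
    + (-(((-I : ℂ) ^ n) ^ 2) * ((b : ℂ) ^ n) ^ 2) * hEq
    + (-(((b : ℂ) ^ n) ^ 2)) * hA2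
end

section
/- Let n ≥ 1 be an odd integer and b > 0. Then for every complex number s and every complex number r with r² = s² + b² and r ≠ 0, one has ((s+r)^n + (r−s)^n)/r = 2^n · Π_{l=1}^{n−1} ( s − i b cos(lπ/n) ). -/
open scoped BigOperators

open Complex in
private lemma aux_pow_add (n : ℕ) (hn0 : 0 < n) (hodd : Odd n) (A B : ℂ) :
    A ^ n + B ^ n = ∏ i ∈ Finset.range n, (A + Complex.exp (2*Real.pi*Complex.I/n) ^ i * B) := by
  by_cases hB : B = 0
  · simp [hB, hn0.ne', Finset.prod_const]
  · have hζ := Complex.isPrimitiveRoot_exp n hn0.ne'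
    have e : (-1 : ℂ) ^ n = -1 := hodd.neg_one_pow
    have h := X_pow_sub_C_eq_prod hζ hn0 e
    have h2 := congrArg (Polynomial.eval (A / B)) h
    simp only [Polynomial.eval_sub, Polynomial.eval_pow, Polynomial.eval_X, Polynomial.eval_C,
      Polynomial.eval_prod] at h2
    calc A ^ n + B ^ n = B ^ n * ((A/B) ^ n - -1) := by rw [div_pow, mul_sub, mul_div_assoc', mul_div_cancel_left₀ _ (pow_ne_zero n hB)]; ring
    _ = B ^ n * ∏ x ∈ Finset.range n, (A / B - Complex.exp (2*Real.pi*Complex.I/n) ^ x * -1) := by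
        rw [h2]
    _ = ∏ i ∈ Finset.range n, (A + Complex.exp (2*Real.pi*Complex.I/n) ^ i * B) := by
        rw [← Finset.card_range n, ← Finset.prod_const (b := B), Finset.card_range,
          ← Finset.prod_mul_distrib]
        refine Finset.prod_congr rfl fun i _ => ?_
        field_simp
        ring

open Complex in
private lemma aux_factor (n l : ℕ) (hn0 : 0 < n) (s r : ℂ) :
    (s + r) + Complex.exp (2*Real.pi*Complex.I/n) ^ l * (r - s)
      = -2 * Complex.exp (((((n:ℝ)+2*l)*Real.pi/(2*n)) : ℝ) * Complex.I)
          * ((Real.sin (l*Real.pi/n) : ℂ) * s + Complex.I * (Real.cos (l*Real.pi/n) : ℂ) * r) := by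
  have hnR : (n:ℝ) ≠ 0 := Nat.cast_ne_zero.2 hn0.ne'
  have hnC : (n:ℂ) ≠ 0 := Nat.cast_ne_zero.2 hn0.ne'
  set ψ : ℝ := ((n:ℝ)+2*l)*Real.pi/(2*n) with hψdef
  have hψ : (ψ:ℂ) * Complex.I * 2 = Real.pi * Complex.I + l * (2*Real.pi*Complex.I/n) := by
    push_cast [hψdef]; field_simp
  have hζl : Complex.exp (2*Real.pi*Complex.I/n) ^ l = -(Complex.exp ((ψ:ℂ) * Complex.I))^2 := by
    rw [sq, ← Complex.exp_add, show (ψ:ℂ)*Complex.I + (ψ:ℂ)*Complex.I = (ψ:ℂ)*Complex.I*2 by ring,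
      hψ, Complex.exp_add, Complex.exp_pi_mul_I, ← Complex.exp_nat_mul]
    ring
  have hψ2 : ψ = Real.pi/2 + l*Real.pi/n := by rw [hψdef]; field_simp
  have hE : Complex.exp ((ψ:ℂ) * Complex.I)
      = -(Real.sin (l*Real.pi/n) : ℂ) + (Real.cos (l*Real.pi/n) : ℂ) * Complex.I := by
    rw [Complex.exp_mul_I, ← Complex.ofReal_cos, ← Complex.ofReal_sin, hψ2,
      Real.cos_add, Real.sin_add, Real.cos_pi_div_two, Real.sin_pi_div_two]
    push_cast; ring
  rw [hζl, hE]
  have hsc : ((Real.sin (l*Real.pi/n) : ℂ))^2 + ((Real.cos (l*Real.pi/n) : ℂ))^2 = 1 := by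
    push_cast [← Complex.ofReal_pow]
    exact_mod_cast congrArg (Complex.ofReal) (Real.sin_sq_add_cos_sq (l*Real.pi/n))
  linear_combination (-(s+r)) * hsc + (s+r)*((Real.cos (l*Real.pi/n) : ℂ))^2*Complex.I_sq

private lemma aux_pair (m : ℕ) (f : ℕ → ℂ) :
    ∏ l ∈ Finset.Icc 1 (2*m), f l = ∏ l ∈ Finset.Icc 1 m, (f l * f (2*m+1-l)) := by
  have hsplit : Finset.Icc 1 (2*m) = Finset.Icc 1 m ∪ Finset.Icc (m+1) (2*m) := by
    ext a; simp only [Finset.mem_Icc, Finset.mem_union]; omega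
  have hdisj : Disjoint (Finset.Icc 1 m) (Finset.Icc (m+1) (2*m)) := by
    simp only [Finset.disjoint_left, Finset.mem_Icc]; omega
  rw [hsplit, Finset.prod_union hdisj, Finset.prod_mul_distrib]
  congr 1
  refine Finset.prod_nbij' (fun l => 2*m+1-l) (fun l => 2*m+1-l) ?_ ?_ ?_ ?_ ?_ <;>
      intro a ha <;> simp only [Finset.mem_Icc] at * <;> try omega
  congr 1; omega

private lemma aux_sum_icc (m : ℕ) : ∑ l ∈ Finset.Icc 1 (2*m), l = m*(2*m+1) := by
  induction m with
  | zero => simp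
  | succ k ih =>
    have h1 : 2*(k+1) = (2*k+1)+1 := by ring
    rw [h1, Finset.sum_Icc_succ_top (by omega), show 2*k+1 = (2*k)+1 from rfl,
      Finset.sum_Icc_succ_top (by omega), ih]
    ring

open Complex in
private lemma aux_scalar (m : ℕ) :
    ∏ l ∈ Finset.Icc 1 (2*m),
      (-2 * Complex.exp ((((((2*m+1:ℕ)):ℝ)+2*l)*Real.pi/(2*(2*m+1:ℕ)) : ℝ) * Complex.I))
      = 2^(2*m) := by
  rw [Finset.prod_mul_distrib, Finset.prod_const, Nat.card_Icc]
  have hcard : 2*m + 1 - 1 = 2*m := by omega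
  rw [hcard, ← Complex.exp_sum]
  have hsum : ∑ l ∈ Finset.Icc 1 (2*m),
      ((((((2*m+1:ℕ)):ℝ)+2*l)*Real.pi/(2*(2*m+1:ℕ)) : ℝ) : ℂ) * Complex.I
      = (m:ℂ) * (2*Real.pi*Complex.I) := by
    rw [← Finset.sum_mul, ← Complex.ofReal_sum]
    have : ∑ l ∈ Finset.Icc 1 (2*m),
        (((((2*m+1:ℕ)):ℝ)+2*l)*Real.pi/(2*(2*m+1:ℕ)) : ℝ) = 2*m*Real.pi := by
      have hne : ((2*m+1:ℕ):ℝ) ≠ 0 := by positivity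
      have hsz : ∑ l ∈ Finset.Icc 1 (2*m), ((l:ℝ)) = (m*(2*m+1) : ℕ) := by
        rw [← aux_sum_icc m]; push_cast; rfl
      have : ∀ l ∈ Finset.Icc 1 (2*m),
          (((((2*m+1:ℕ)):ℝ)+2*l)*Real.pi/(2*(2*m+1:ℕ)) : ℝ)
            = Real.pi/2 + (l:ℝ) * (Real.pi/((2*m+1:ℕ):ℝ)) := by
        intro l _; field_simp
      rw [Finset.sum_congr rfl this, Finset.sum_add_distrib, Finset.sum_const, Nat.card_Icc,
        hcard, ← Finset.sum_mul, hsz]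
      push_cast
      field_simp
      ring
    rw [this]; push_cast; ring
  rw [hsum, Complex.exp_nat_mul, Complex.exp_two_pi_mul_I, one_pow, mul_one]
  have : (-2:ℂ)^(2*m) = ((-2:ℂ)^2)^m := by rw [← pow_mul]
  rw [this, show ((-2:ℂ)^2) = (2:ℂ)^2 by norm_num, pow_mul]

/-- **Factorization of `Q_{n−1}(s)` for odd `n`** (Lemma 3.4, second part). For odd
`n ≥ 1`, `b > 0`, and any complex `s, r` with `r² = s² + b²` and `r ≠ 0`:
`((s+r)^n + (r−s)^n)/r = 2^n ∏_{l=1}^{n−1} (s − i b cos(lπ/n))`. -/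
theorem Qn_factorization_odd
    (n : ℕ) (hn : 1 ≤ n) (hodd : Odd n) (b : ℝ) (hb : 0 < b)
    (s r : ℂ) (hr : r ^ 2 = s ^ 2 + (b : ℂ) ^ 2) (hr0 : r ≠ 0) :
    ((s + r) ^ n + (r - s) ^ n) / r
      = 2 ^ n * ∏ l ∈ Finset.Icc 1 (n - 1),
          (s - Complex.I * (b : ℂ) * (Real.cos (l * Real.pi / n) : ℝ)) := by
  obtain ⟨m, hm⟩ := hodd
  have hmn : n = 2*m+1 := by omega
  subst hmn
  clear hm hn
  set N : ℕ := 2*m+1 with hN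
  have hn0 : 0 < N := by omega
  have hodd' : Odd N := ⟨m, by omega⟩
  have hn1 : N - 1 = 2*m := by omega
  -- notation
  set F : ℕ → ℂ := fun l =>
    (Real.sin (l*Real.pi/N) : ℂ) * s + Complex.I * (Real.cos (l*Real.pi/N) : ℂ) * r with hF
  set G : ℕ → ℂ := fun l => s - Complex.I * (b : ℂ) * ((Real.cos (l * Real.pi / N) : ℝ) : ℂ)
    with hG
  have h1 := aux_pow_add N hn0 hodd' (s+r) (r-s)
  have herase : (Finset.range N).erase 0 = Finset.Icc 1 (2*m) := by
    ext a; simp only [Finset.mem_erase, Finset.mem_range, Finset.mem_Icc]; omega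
  have h2 : ∏ i ∈ Finset.range N, ((s + r) + Complex.exp (2*Real.pi*Complex.I/N) ^ i * (r-s))
      = (2*r) * ∏ i ∈ Finset.Icc 1 (2*m),
          ((s + r) + Complex.exp (2*Real.pi*Complex.I/N) ^ i * (r-s)) := by
    rw [← Finset.mul_prod_erase (Finset.range N) _ (Finset.mem_range.2 hn0), herase]
    congr 1
    simp only [pow_zero, one_mul]
    ring
  have h3 : ∏ i ∈ Finset.Icc 1 (2*m),
        ((s + r) + Complex.exp (2*Real.pi*Complex.I/N) ^ i * (r-s))
      = (∏ i ∈ Finset.Icc 1 (2*m),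
          (-2 * Complex.exp (((((N:ℝ)+2*i)*Real.pi/(2*N)) : ℝ) * Complex.I)))
        * ∏ i ∈ Finset.Icc 1 (2*m), F i := by
    rw [← Finset.prod_mul_distrib]
    exact Finset.prod_congr rfl fun i _ => aux_factor N i hn0 s r
  have h4 : ∏ i ∈ Finset.Icc 1 (2*m), F i = ∏ i ∈ Finset.Icc 1 (2*m), G i := by
    rw [aux_pair m F, aux_pair m G]
    refine Finset.prod_congr rfl fun l hl => ?_
    simp only [Finset.mem_Icc] at hl
    have hle : l ≤ 2*m+1 := by omega
    have hNR : ((N:ℕ):ℝ) ≠ 0 := by positivity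
    have hcast : ((2*m+1-l : ℕ):ℝ) = ((N:ℕ):ℝ) - (l:ℝ) := by
      push_cast [Nat.cast_sub hle, hN]; ring
    have hangle : ((2*m+1-l : ℕ):ℝ) * Real.pi / N = Real.pi - (l:ℝ)*Real.pi/N := by
      rw [hcast]; field_simp
    have hsin : Real.sin (((2*m+1-l : ℕ):ℝ) * Real.pi / N) = Real.sin ((l:ℝ)*Real.pi/N) := by
      rw [hangle, Real.sin_pi_sub]
    have hcos : Real.cos (((2*m+1-l : ℕ):ℝ) * Real.pi / N) = -Real.cos ((l:ℝ)*Real.pi/N) := by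
      rw [hangle, Real.cos_pi_sub]
    have hsc : ((Real.sin ((l:ℝ)*Real.pi/N) : ℂ))^2 + ((Real.cos ((l:ℝ)*Real.pi/N) : ℂ))^2 = 1 := by
      push_cast [← Complex.ofReal_pow]
      exact_mod_cast congrArg (Complex.ofReal) (Real.sin_sq_add_cos_sq ((l:ℝ)*Real.pi/N))
    simp only [hF, hG, hsin, hcos, Complex.ofReal_neg]
    linear_combination (-Complex.I^2*((Real.cos ((l:ℝ)*Real.pi/N) : ℂ))^2) * hr
      + s^2 * hsc
      + (-s^2*((Real.cos ((l:ℝ)*Real.pi/N) : ℂ))^2) * Complex.I_sq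
  rw [hn1, h1, h2, h3, aux_scalar m, h4, div_eq_iff hr0]
  rw [hN]
  ring
end

section
/- Let k > 0 be real, n ≥ 1 an integer, and a_1, …, a_n real numbers. Define f_{1,k}(t) := t^{k−1} e^{−i a_1 t} / Γ(k) for t > 0, and for 2 ≤ j ≤ n define recursively f_{j,k}(t) := ∫_0^t f_{j−1,k}(τ) · (t−τ)^{k−1} e^{−i a_j (t−τ)} / Γ(k) dτ. Then for every t > 0, |f_{n,k}(t)| ≤ t^{nk−1} / Γ(nk). -/
open scoped BigOperators
open MeasureTheory

lemma betaReal_integrable {p q t : ℝ} (hp : 0 < p) (hq : 0 < q) (ht : 0 < t) :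
    IntervalIntegrable (fun τ : ℝ => τ ^ (p - 1) * (t - τ) ^ (q - 1)) volume 0 t := by
  have h1 : IntervalIntegrable
      (fun x : ℝ => (x : ℂ) ^ ((p : ℂ) - 1) * (1 - (x : ℂ)) ^ ((q : ℂ) - 1)) volume 0 1 :=
    Complex.betaIntegral_convergent (by simpa using hp) (by simpa using hq)
  have h3 : IntervalIntegrable (fun x : ℝ => x ^ (p - 1) * (1 - x) ^ (q - 1)) volume 0 1 := by
    refine h1.norm.congr_ae ?_
    filter_upwards [ae_restrict_mem measurableSet_uIoc] with x hx
    rw [Set.uIoc_of_le zero_le_one] at hx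
    have h1x : (0:ℝ) ≤ 1 - x := by linarith [hx.2]
    have A : (x:ℂ) ^ ((p:ℂ) - 1) = ((x ^ (p - 1) : ℝ) : ℂ) := by
      rw [show ((p:ℂ) - 1) = ((p - 1 : ℝ) : ℂ) by push_cast; ring,
        ← Complex.ofReal_cpow hx.1.le]
    have B : ((1:ℂ) - (x:ℂ)) ^ ((q:ℂ) - 1) = (((1 - x) ^ (q - 1) : ℝ) : ℂ) := by
      rw [show ((q:ℂ) - 1) = ((q - 1 : ℝ) : ℂ) by push_cast; ring,
        show ((1:ℂ) - (x:ℂ)) = ((1 - x : ℝ) : ℂ) by push_cast; ring,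
        ← Complex.ofReal_cpow h1x]
    show ‖(x:ℂ) ^ ((p:ℂ) - 1) * ((1:ℂ) - (x:ℂ)) ^ ((q:ℂ) - 1)‖ = _
    rw [A, B, ← Complex.ofReal_mul, Complex.norm_real,
      Real.norm_of_nonneg (mul_nonneg (Real.rpow_nonneg hx.1.le _) (Real.rpow_nonneg h1x _))]
  have h4 := (h3.comp_mul_left (c := t⁻¹) (h := enorm_ne_top) (h' := enorm_ne_top)).const_mul (t ^ (p - 1) * t ^ (q - 1))
  simp only [div_inv_eq_mul, zero_mul, one_mul, zero_div, one_div, inv_inv] at h4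
  refine h4.congr_ae ?_
  filter_upwards [ae_restrict_mem measurableSet_uIoc] with x hx
  rw [Set.uIoc_of_le ht.le] at hx
  have htp : (0:ℝ) < t ^ (p - 1) := Real.rpow_pos_of_pos ht _
  have htq : (0:ℝ) < t ^ (q - 1) := Real.rpow_pos_of_pos ht _
  have E1 : (t⁻¹ * x) ^ (p - 1) = (t ^ (p - 1))⁻¹ * x ^ (p - 1) := by
    rw [Real.mul_rpow (inv_nonneg.mpr ht.le) hx.1.le, Real.inv_rpow ht.le]
  have E2 : (1 - t⁻¹ * x) ^ (q - 1) = (t ^ (q - 1))⁻¹ * (t - x) ^ (q - 1) := by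
    rw [show 1 - t⁻¹ * x = t⁻¹ * (t - x) by field_simp,
      Real.mul_rpow (inv_nonneg.mpr ht.le) (sub_nonneg.mpr hx.2), Real.inv_rpow ht.le]
  rw [E1, E2]
  field_simp

lemma betaReal_eval {p q t : ℝ} (hp : 0 < p) (hq : 0 < q) (ht : 0 < t) :
    (∫ τ in (0:ℝ)..t, τ ^ (p - 1) * (t - τ) ^ (q - 1))
      = t ^ (p + q - 1) * (Real.Gamma p * Real.Gamma q / Real.Gamma (p + q)) := by
  have hGpq : (0:ℝ) < Real.Gamma (p + q) := Real.Gamma_pos_of_pos (by positivity)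
  have hbeta : Complex.betaIntegral p q
      = ((Real.Gamma p * Real.Gamma q / Real.Gamma (p + q) : ℝ) : ℂ) := by
    have hG := Complex.Gamma_mul_Gamma_eq_betaIntegral (s := (p:ℂ)) (t := (q:ℂ))
      (by simpa using hp) (by simpa using hq)
    have hne : Complex.Gamma ((p:ℂ) + (q:ℂ)) ≠ 0 := by
      rw [← Complex.ofReal_add, Complex.Gamma_ofReal]
      exact_mod_cast hGpq.ne'
    rw [eq_comm, mul_comm] at hG
    rw [← eq_div_iff hne] at hG
    rw [hG, ← Complex.ofReal_add, Complex.Gamma_ofReal, Complex.Gamma_ofReal,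
      Complex.Gamma_ofReal]
    push_cast
    ring
  have hb := Complex.betaIntegral_scaled (p:ℂ) (q:ℂ) ht
  have key : ((∫ τ in (0:ℝ)..t, τ ^ (p - 1) * (t - τ) ^ (q - 1) : ℝ) : ℂ)
      = ((t ^ (p + q - 1) * (Real.Gamma p * Real.Gamma q / Real.Gamma (p + q)) : ℝ) : ℂ) := by
    rw [← intervalIntegral.integral_ofReal]
    have hcong : ∀ τ ∈ Set.uIcc (0:ℝ) t,
        ((τ ^ (p - 1) * (t - τ) ^ (q - 1) : ℝ) : ℂ)
          = (τ : ℂ) ^ ((p:ℂ) - 1) * ((t : ℂ) - τ) ^ ((q:ℂ) - 1) := by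
      intro τ hτ
      rw [Set.uIcc_of_le ht.le] at hτ
      rw [Complex.ofReal_mul, Complex.ofReal_cpow hτ.1,
        Complex.ofReal_cpow (by linarith [hτ.2] : (0:ℝ) ≤ t - τ)]
      push_cast
      ring
    rw [intervalIntegral.integral_congr hcong, hb, hbeta,
      show (p:ℂ) + q - 1 = ((p + q - 1 : ℝ) : ℂ) by push_cast; ring,
      ← Complex.ofReal_cpow ht.le]
    push_cast
    ring
  exact_mod_cast key

lemma norm_factor {k x : ℝ} (z : ℂ) (hx : 0 ≤ x) (hk : 0 < k) (hz : z.re = 0) :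
    ‖((x ^ (k - 1) : ℝ) : ℂ) * Complex.exp z / ((Real.Gamma k : ℝ) : ℂ)‖
      = x ^ (k - 1) / Real.Gamma k := by
  have hG : (0:ℝ) < Real.Gamma k := Real.Gamma_pos_of_pos hk
  rw [norm_div, norm_mul, Complex.norm_real, Complex.norm_real,
    Complex.norm_exp, hz, Real.exp_zero, mul_one,
    Real.norm_of_nonneg (Real.rpow_nonneg hx _), Real.norm_of_nonneg hG.le]


lemma re_neg_I_mul (a b : ℝ) : (-Complex.I * (a : ℂ) * (b : ℂ)).re = 0 := by
  simp [Complex.mul_re]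

/-- The `n`-fold Laplace convolution `f_{n,k}` of the functions
`t ↦ t^{k−1} e^{−i a_j t}/Γ(k)`, `j = 1, …, n`. -/
noncomputable def laplaceConvPow (k : ℝ) (a : ℕ → ℝ) : ℕ → ℝ → ℂ
  | 0, _ => 0
  | 1, t => ((t ^ (k - 1) : ℝ) : ℂ) * Complex.exp (-Complex.I * (a 1 : ℂ) * (t : ℂ)) /
      ((Real.Gamma k : ℝ) : ℂ)
  | (j + 2), t => ∫ τ in (0 : ℝ)..t, laplaceConvPow k a (j + 1) τ *
      ((((t - τ) ^ (k - 1) : ℝ) : ℂ) *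
        Complex.exp (-Complex.I * (a (j + 2) : ℂ) * ((t : ℂ) - (τ : ℂ))) /
        ((Real.Gamma k : ℝ) : ℂ))

lemma laplaceConvPow_aux (k : ℝ) (hk : 0 < k) (a : ℕ → ℝ) :
    ∀ n : ℕ, ∀ t : ℝ, 0 < t →
      ‖laplaceConvPow k a (n + 1) t‖
        ≤ t ^ (((n:ℝ) + 1) * k - 1) / Real.Gamma (((n:ℝ) + 1) * k) := by
  intro n
  induction n with
  | zero =>
    intro t ht
    rw [show (0:ℕ) + 1 = 1 from rfl, laplaceConvPow,
      norm_factor (-Complex.I * ((a 1 : ℝ) : ℂ) * (t : ℂ)) ht.le hk (re_neg_I_mul _ _)]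
    norm_num
  | succ j ih =>
    intro t ht
    set p : ℝ := ((j:ℝ) + 1) * k with hp
    have hp0 : 0 < p := by positivity
    have hGp : (0:ℝ) < Real.Gamma p := Real.Gamma_pos_of_pos hp0
    have hGk : (0:ℝ) < Real.Gamma k := Real.Gamma_pos_of_pos hk
    rw [show j + 1 + 1 = j + 2 from rfl, laplaceConvPow]
    set g : ℝ → ℝ := fun τ => τ ^ (p - 1) * (t - τ) ^ (k - 1) / (Real.Gamma p * Real.Gamma k)
      with hg
    have hgint : IntervalIntegrable g volume 0 t :=
      (betaReal_integrable hp0 hk ht).div_const _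
    have hbound : ∀ᵐ τ ∂(volume.restrict (Set.uIoc (0:ℝ) t)),
        ‖laplaceConvPow k a (j + 1) τ *
          ((((t - τ) ^ (k - 1) : ℝ) : ℂ) *
            Complex.exp (-Complex.I * ((a (j + 2) : ℝ) : ℂ) * ((t : ℂ) - (τ : ℂ))) /
            ((Real.Gamma k : ℝ) : ℂ))‖ ≤ g τ := by
      filter_upwards [ae_restrict_mem measurableSet_uIoc] with τ hτ
      rw [Set.uIoc_of_le ht.le] at hτ
      have h1 : ‖laplaceConvPow k a (j + 1) τ‖ ≤ τ ^ (p - 1) / Real.Gamma p := ih τ hτ.1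
      have h2 : ‖(((t - τ) ^ (k - 1) : ℝ) : ℂ) *
          Complex.exp (-Complex.I * ((a (j + 2) : ℝ) : ℂ) * ((t : ℂ) - (τ : ℂ))) /
          ((Real.Gamma k : ℝ) : ℂ)‖ = (t - τ) ^ (k - 1) / Real.Gamma k := by
        rw [show ((t:ℂ) - (τ:ℂ)) = ((t - τ : ℝ) : ℂ) by push_cast; ring]
        exact norm_factor _ (sub_nonneg.mpr hτ.2) hk (re_neg_I_mul _ _)
      rw [norm_mul, h2, hg]
      calc ‖laplaceConvPow k a (j + 1) τ‖ * ((t - τ) ^ (k - 1) / Real.Gamma k)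
          ≤ (τ ^ (p - 1) / Real.Gamma p) * ((t - τ) ^ (k - 1) / Real.Gamma k) := by
            exact mul_le_mul_of_nonneg_right h1
              (div_nonneg (Real.rpow_nonneg (sub_nonneg.mpr hτ.2) _) hGk.le)
        _ = τ ^ (p - 1) * (t - τ) ^ (k - 1) / (Real.Gamma p * Real.Gamma k) := by
            ring
    have key := intervalIntegral.norm_integral_le_abs_of_norm_le hbound hgint
    have hgnonneg : (0:ℝ) ≤ ∫ τ in (0:ℝ)..t, g τ := by
      apply intervalIntegral.integral_nonneg ht.le
      intro u hu
      have h1 : (0:ℝ) ≤ u := hu.1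
      have h2 : (0:ℝ) ≤ t - u := sub_nonneg.mpr hu.2
      exact div_nonneg (mul_nonneg (Real.rpow_nonneg h1 _) (Real.rpow_nonneg h2 _))
        (by positivity)
    have hgval : (∫ τ in (0:ℝ)..t, g τ)
        = t ^ (((j:ℝ) + 1 + 1) * k - 1) / Real.Gamma (((j:ℝ) + 1 + 1) * k) := by
      rw [hg]
      rw [intervalIntegral.integral_div, betaReal_eval hp0 hk ht]
      have hGpk : (0:ℝ) < Real.Gamma (p + k) := Real.Gamma_pos_of_pos (by positivity)
      rw [show ((j:ℝ) + 1 + 1) * k = p + k by rw [hp]; ring]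
      field_simp
    refine key.trans (le_of_eq ?_)
    rw [abs_of_nonneg hgnonneg, hgval]
    push_cast
    ring_nf

/-- **Bound for the iterated Laplace convolution** (Lemma 3.10): for `k > 0`, real
`a_1, …, a_n`, and every `t > 0`, `|f_{n,k}(t)| ≤ t^{nk−1}/Γ(nk)`. -/
theorem laplaceConvPow_bound
    (k : ℝ) (hk : 0 < k) (n : ℕ) (hn : 1 ≤ n) (a : ℕ → ℝ) :
    ∀ t : ℝ, 0 < t →
      ‖laplaceConvPow k a n t‖ ≤ t ^ ((n : ℝ) * k - 1) / Real.Gamma ((n : ℝ) * k) := by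
  obtain ⟨m, rfl⟩ : ∃ m, n = m + 1 := ⟨n - 1, by omega⟩
  intro t ht
  have := laplaceConvPow_aux k hk a m t ht
  have hcast : ((m:ℝ) + 1) = ((m + 1 : ℕ) : ℝ) := by push_cast; ring
  rwa [hcast] at this
end

section
/- Let k ≥ 1 be an integer, b > 0, and let ω, η be complex numbers with |ω| = |η| = 1. For u, v ∈ [−1, 1] set X(u,v) := Im(ω^k) Im(η^k) u + Re(ω^k) Re(η^k) v; then |X(u,v)| ≤ 1 and X(1,1) = Re(ω^k · conj(η)^k). Let q(u,v) := arccos(X(u,v)) and A(s, q) := Π_{l=0}^{k−1} ( s + i b cos((q + 2πl)/k) ). Then: (i) for all complex s and all complex r with r² = s² + b² and R := s + r ≠ 0, one has R^k − 2(−ib)^k X(u,v) + (−ib)^{2k}/R^k = 2^k A(s, q(u,v)); and (ii) for all complex s, A(s, q(1,1)) = A(s, q(u,v)) + 2^{1−k} (−ib)^k [ Im(ω^k) Im(η^k)(u−1) + Re(ω^k) Re(η^k)(v−1) ]. -/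
open scoped BigOperators

open Polynomial in
lemma prod_sub_primroot {k : ℕ} {ζ : ℂ} (hk : 0 < k) (hζ : IsPrimitiveRoot ζ k)
    (z α : ℂ) : ∏ i ∈ Finset.range k, (z - ζ ^ i * α) = z ^ k - α ^ k := by
  have h := X_pow_sub_C_eq_prod hζ hk (rfl : α ^ k = α ^ k)
  have h2 := congrArg (Polynomial.eval z) h
  simpa [Polynomial.eval_prod] using h2.symm

/-- **Factorization identities for the dihedral Laplace-domain kernel** (Lemma 4.3).
For `k ≥ 1`, `b > 0`, unimodular `ω, η ∈ ℂ`, and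
`X(u,v) = Im(ω^k)Im(η^k)u + Re(ω^k)Re(η^k)v`, `q(u,v) = arccos X(u,v)`,
`A(s,q) = ∏_{l<k} (s + i b cos((q+2πl)/k))`, one has `|X(u,v)| ≤ 1`,
`X(1,1) = Re(ω^k conj(η)^k)`, and:
(i) `R^k − 2(−ib)^k X(u,v) + (−ib)^{2k}/R^k = 2^k A(s, q(u,v))` whenever
`r² = s² + b²` and `R = s + r ≠ 0`;
(ii) `A(s, q(1,1)) = A(s, q(u,v)) + 2^{1−k}(−ib)^k (Im(ω^k)Im(η^k)(u−1) + Re(ω^k)Re(η^k)(v−1))`. -/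
theorem dihedral_factorization
    (k : ℕ) (hk : 1 ≤ k) (b : ℝ) (hb : 0 < b)
    (ω η : ℂ) (hω : ‖ω‖ = 1) (hη : ‖η‖ = 1)
    (X : ℝ → ℝ → ℝ)
    (hX : ∀ u v, X u v = (ω ^ k).im * (η ^ k).im * u + (ω ^ k).re * (η ^ k).re * v)
    (q : ℝ → ℝ → ℝ) (hq : ∀ u v, q u v = Real.arccos (X u v))
    (A : ℂ → ℝ → ℂ)
    (hA : ∀ s c, A s c = ∏ l ∈ Finset.range k,
      (s + Complex.I * (b : ℂ) * ((Real.cos ((c + 2 * Real.pi * l) / k) : ℝ) : ℂ))) :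
    (∀ u ∈ Set.Icc (-1 : ℝ) 1, ∀ v ∈ Set.Icc (-1 : ℝ) 1, |X u v| ≤ 1) ∧
    X 1 1 = (ω ^ k * (starRingEnd ℂ η) ^ k).re ∧
    (∀ u ∈ Set.Icc (-1 : ℝ) 1, ∀ v ∈ Set.Icc (-1 : ℝ) 1,
      ∀ s r : ℂ, r ^ 2 = s ^ 2 + (b : ℂ) ^ 2 → s + r ≠ 0 →
        (s + r) ^ k - 2 * (-Complex.I * (b : ℂ)) ^ k * ((X u v : ℝ) : ℂ) +
            (-Complex.I * (b : ℂ)) ^ (2 * k) / (s + r) ^ k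
          = 2 ^ k * A s (q u v)) ∧
    (∀ u ∈ Set.Icc (-1 : ℝ) 1, ∀ v ∈ Set.Icc (-1 : ℝ) 1, ∀ s : ℂ,
      A s (q 1 1) = A s (q u v) + (2 : ℂ) ^ ((1 : ℤ) - (k : ℤ)) *
        (-Complex.I * (b : ℂ)) ^ k *
        ((((ω ^ k).im * (η ^ k).im * (u - 1) + (ω ^ k).re * (η ^ k).re * (v - 1) : ℝ)) : ℂ)) := by
  have hk0 : 0 < k := hk
  have hkR : (k : ℝ) ≠ 0 := Nat.cast_ne_zero.mpr hk0.ne'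
  have hkC : (k : ℂ) ≠ 0 := Nat.cast_ne_zero.mpr hk0.ne'
  have hω1 : (ω ^ k).re * (ω ^ k).re + (ω ^ k).im * (ω ^ k).im = 1 := by
    rw [← Complex.normSq_apply, ← Complex.sq_norm, norm_pow, hω]; norm_num
  have hη1 : (η ^ k).re * (η ^ k).re + (η ^ k).im * (η ^ k).im = 1 := by
    rw [← Complex.normSq_apply, ← Complex.sq_norm, norm_pow, hη]; norm_num
  have habs : ∀ u ∈ Set.Icc (-1 : ℝ) 1, ∀ v ∈ Set.Icc (-1 : ℝ) 1, |X u v| ≤ 1 := by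
    intro u hu v hv
    obtain ⟨hu1, hu2⟩ := hu
    obtain ⟨hv1, hv2⟩ := hv
    rw [abs_le, hX]
    constructor
    · nlinarith [sq_nonneg ((ω ^ k).im + (η ^ k).im * u), sq_nonneg ((ω ^ k).re + (η ^ k).re * v),
        mul_nonneg (mul_nonneg (mul_self_nonneg ((η ^ k).im)) (by linarith : (0:ℝ) ≤ 1 - u))
          (by linarith : (0:ℝ) ≤ 1 + u),
        mul_nonneg (mul_nonneg (mul_self_nonneg ((η ^ k).re)) (by linarith : (0:ℝ) ≤ 1 - v))
          (by linarith : (0:ℝ) ≤ 1 + v)]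
    · nlinarith [sq_nonneg ((ω ^ k).im - (η ^ k).im * u), sq_nonneg ((ω ^ k).re - (η ^ k).re * v),
        mul_nonneg (mul_nonneg (mul_self_nonneg ((η ^ k).im)) (by linarith : (0:ℝ) ≤ 1 - u))
          (by linarith : (0:ℝ) ≤ 1 + u),
        mul_nonneg (mul_nonneg (mul_self_nonneg ((η ^ k).re)) (by linarith : (0:ℝ) ≤ 1 - v))
          (by linarith : (0:ℝ) ≤ 1 + v)]
  have hx11 : X 1 1 = (ω ^ k * (starRingEnd ℂ η) ^ k).re := by
    have e1 : (((starRingEnd ℂ) η) ^ k).re = (η ^ k).re := by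
      rw [← map_pow]; exact Complex.conj_re _
    have e2 : (((starRingEnd ℂ) η) ^ k).im = -(η ^ k).im := by
      rw [← map_pow]; exact Complex.conj_im _
    rw [hX, Complex.mul_re, e1, e2]
    ring
  have h1mem : (1 : ℝ) ∈ Set.Icc (-1 : ℝ) 1 := ⟨by norm_num, le_refl 1⟩
  have hζprim : IsPrimitiveRoot (Complex.exp (2 * Real.pi * Complex.I / k)) k :=
    Complex.isPrimitiveRoot_exp k hk0.ne'
  have main : ∀ u ∈ Set.Icc (-1 : ℝ) 1, ∀ v ∈ Set.Icc (-1 : ℝ) 1,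
      ∀ s r : ℂ, r ^ 2 = s ^ 2 + (b : ℂ) ^ 2 → s + r ≠ 0 →
        (s + r) ^ k - 2 * (-Complex.I * (b : ℂ)) ^ k * ((X u v : ℝ) : ℂ) +
            (-Complex.I * (b : ℂ)) ^ (2 * k) / (s + r) ^ k
          = 2 ^ k * A s (q u v) := by
    intro u hu v hv s r hr hR
    set ζ : ℂ := Complex.exp (2 * Real.pi * Complex.I / k) with hζ
    have hXb := abs_le.mp (habs u hu v hv)
    have hcosθ : Real.cos (q u v) = X u v := by
      rw [hq]; exact Real.cos_arccos hXb.1 hXb.2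
    have key : ∀ l ∈ Finset.range k,
        (2 * (s + r)) * (s + Complex.I * (b : ℂ) *
          ((Real.cos ((q u v + 2 * Real.pi * l) / k) : ℝ) : ℂ))
        = ((s + r) - ζ ^ l * ((-Complex.I * (b : ℂ)) *
              Complex.exp ((q u v / k : ℝ) * Complex.I)))
          * ((s + r) - (ζ⁻¹) ^ l * ((-Complex.I * (b : ℂ)) *
              Complex.exp (-((q u v / k : ℝ) * Complex.I)))) := by
      intro l _
      have hE1 : ζ ^ l * Complex.exp ((q u v / k : ℝ) * Complex.I)
          = Complex.exp (((q u v + 2 * Real.pi * l) / k : ℝ) * Complex.I) := by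
        rw [hζ, ← Complex.exp_nat_mul, ← Complex.exp_add]
        congr 1
        push_cast
        field_simp
        ring
      have hE2 : (ζ⁻¹) ^ l * Complex.exp (-((q u v / k : ℝ) * Complex.I))
          = Complex.exp (-(((q u v + 2 * Real.pi * l) / k : ℝ) * Complex.I)) := by
        rw [hζ, ← Complex.exp_neg, ← Complex.exp_nat_mul, ← Complex.exp_add]
        congr 1
        push_cast
        field_simp
        ring
      have hcos : 2 * ((Real.cos ((q u v + 2 * Real.pi * l) / k) : ℝ) : ℂ)
          = Complex.exp ((((q u v + 2 * Real.pi * l) / k : ℝ) : ℂ) * Complex.I)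
            + Complex.exp (-((((q u v + 2 * Real.pi * l) / k : ℝ) : ℂ) * Complex.I)) := by
        have h := Complex.two_cos ((((q u v + 2 * Real.pi * l) / k : ℝ)) : ℂ)
        rw [neg_mul] at h
        rw [Complex.ofReal_cos]
        exact h
      have hEE : Complex.exp ((((q u v + 2 * Real.pi * l) / k : ℝ) : ℂ) * Complex.I)
          * Complex.exp (-((((q u v + 2 * Real.pi * l) / k : ℝ) : ℂ) * Complex.I)) = 1 := by
        rw [← Complex.exp_add, add_neg_cancel, Complex.exp_zero]
      linear_combination ((s + r) * (-Complex.I * (b : ℂ))) * hE1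
        + ((s + r) * (-Complex.I * (b : ℂ))) * hE2
        + (Complex.I * (b : ℂ) * (s + r)) * hcos
        - ((-Complex.I * (b : ℂ))^2 * (ζ⁻¹) ^ l
            * Complex.exp (-((q u v / k : ℝ) * Complex.I))) * hE1
        - ((-Complex.I * (b : ℂ))^2
            * Complex.exp ((((q u v + 2 * Real.pi * l) / k : ℝ) : ℂ) * Complex.I)) * hE2
        - ((-Complex.I * (b : ℂ))^2) * hEE
        - hr
        - (b : ℂ) ^ 2 * Complex.I_sq
    have hprod := Finset.prod_congr rfl key
    rw [Finset.prod_mul_distrib, Finset.prod_const, Finset.card_range,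
      Finset.prod_mul_distrib,
      prod_sub_primroot hk0 hζprim (s + r) _, prod_sub_primroot hk0 hζprim.inv (s + r) _]
      at hprod
    have hαk : ((-Complex.I * (b : ℂ)) * Complex.exp ((q u v / k : ℝ) * Complex.I)) ^ k
        = (-Complex.I * (b : ℂ)) ^ k * Complex.exp ((q u v : ℝ) * Complex.I) := by
      rw [mul_pow, ← Complex.exp_nat_mul]
      congr 2
      push_cast
      field_simp
    have hαk' : ((-Complex.I * (b : ℂ)) * Complex.exp (-((q u v / k : ℝ) * Complex.I))) ^ k
        = (-Complex.I * (b : ℂ)) ^ k * Complex.exp (-(((q u v : ℝ) : ℂ) * Complex.I)) := by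
      rw [mul_pow, ← Complex.exp_nat_mul]
      congr 2
      push_cast
      field_simp
    rw [hαk, hαk', mul_pow] at hprod
    have hcos2 : Complex.exp (((q u v : ℝ) : ℂ) * Complex.I)
        + Complex.exp (-(((q u v : ℝ) : ℂ) * Complex.I)) = 2 * ((X u v : ℝ) : ℂ) := by
      have h := Complex.two_cos (((q u v : ℝ)) : ℂ)
      rw [neg_mul] at h
      rw [← h, ← Complex.ofReal_cos, hcosθ]
    have hee : Complex.exp (((q u v : ℝ) : ℂ) * Complex.I)
        * Complex.exp (-(((q u v : ℝ) : ℂ) * Complex.I)) = 1 := by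
      rw [← Complex.exp_add, add_neg_cancel, Complex.exp_zero]
    have hRk : (s + r) ^ k ≠ 0 := pow_ne_zero _ hR
    rw [hA]
    refine mul_right_cancel₀ hRk ?_
    rw [add_mul, div_mul_cancel₀ _ hRk]
    linear_combination -hprod
      + ((-Complex.I * (b : ℂ)) ^ k * (s + r) ^ k) * hcos2
      - ((-Complex.I * (b : ℂ)) ^ k * (-Complex.I * (b : ℂ)) ^ k) * hee
  refine ⟨habs, hx11, main, ?_⟩
  intro u hu v hv s
  obtain ⟨r, hr⟩ := IsAlgClosed.exists_pow_nat_eq (s ^ 2 + (b : ℂ) ^ 2) (n := 2) (by norm_num)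
  have hR : s + r ≠ 0 := by
    intro h
    have hrr : r = -s := by linear_combination h
    rw [hrr] at hr
    have hb0 : ((b : ℂ)) ^ 2 = 0 := by linear_combination -hr
    have hbz : (b : ℂ) = 0 := pow_eq_zero_iff (by norm_num) |>.mp hb0
    exact hb.ne' (by exact_mod_cast hbz)
  have h1 := main 1 h1mem 1 h1mem s r hr hR
  have h2 := main u hu v hv s r hr hR
  have hΔ : ((X u v : ℝ) : ℂ) - ((X 1 1 : ℝ) : ℂ)
      = (((ω ^ k).im * (η ^ k).im * (u - 1) + (ω ^ k).re * (η ^ k).re * (v - 1) : ℝ) : ℂ) := by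
    rw [hX, hX]
    push_cast
    ring
  have h2k : (2 : ℂ) ^ k ≠ 0 := pow_ne_zero _ two_ne_zero
  have hpow2 : (2 : ℂ) ^ ((1 : ℤ) - (k : ℤ)) * (2 : ℂ) ^ k = 2 := by
    rw [← zpow_natCast (2 : ℂ) k, ← zpow_add₀ (two_ne_zero)]
    norm_num
  apply mul_left_cancel₀ h2k
  linear_combination (h2 - h1) + 2 * (-Complex.I * (b : ℂ)) ^ k * hΔ
    - ((-Complex.I * (b : ℂ)) ^ k *
        (((ω ^ k).im * (η ^ k).im * (u - 1) + (ω ^ k).re * (η ^ k).re * (v - 1) : ℝ) : ℂ)) * hpow2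
end
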